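/- Let S be a nonempty subset of {1,…,n} and let w ∈ Sym(n) be such that w⁻¹(i) < w⁻¹(j) whenever i, j ∈ S and i < j. Then for all x, y ∈ Sym(S): x∘w ≤ y∘w in the Bruhat order of Sym(n) if and only if x ≤_S y in the Bruhat order of Sym(S). -/

import Mathlib

/-- The length of `w` with respect to a generating set `S`. -/
noncomputable def lengthWrt {G : Type*} [Group G] (S : Set G) (w : G) : ℕ :=
  sInf {k | ∃ l : List G, (∀ s ∈ l, s ∈ S) ∧ l.prod = w ∧ l.length = k}

/-- A reduced word with letters in `S`. -/
def IsReducedWordWrt {G : Type*} [Group G] (S : Set G) (l : List G) : Prop :=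
  (∀ s ∈ l, s ∈ S) ∧ lengthWrt S l.prod = l.length

/-- The Bruhat order with respect to `S`: `x ≤ y` iff some reduced word for `y` contains
a subword which is a reduced word for `x`. -/
def bruhatLEWrt {G : Type*} [Group G] (S : Set G) (x y : G) : Prop :=
  ∃ l : List G, IsReducedWordWrt S l ∧ l.prod = y ∧
    ∃ l' : List G, l'.Sublist l ∧ IsReducedWordWrt S l' ∧ l'.prod = x

/-- The simple generators of `Sym(n)`: the adjacent transpositions `(i, i+1)`. -/
def adjTranspositions (n : ℕ) : Set (Equiv.Perm (Fin n)) :=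
  {g | ∃ i j : Fin n, (i : ℕ) + 1 = (j : ℕ) ∧ g = Equiv.swap i j}

/-- The simple generators of `Sym(S)` for `S = {ℓ₁ < ⋯ < ℓ_h}`: the transpositions
`(ℓ_i, ℓ_{i+1})` of consecutive elements of `S`. -/
def adjTranspositionsOn (n : ℕ) (S : Set (Fin n)) : Set (Equiv.Perm (Fin n)) :=
  {g | ∃ a b : Fin n, a ∈ S ∧ b ∈ S ∧ a < b ∧ (∀ c ∈ S, ¬ (a < c ∧ c < b)) ∧
    g = Equiv.swap a b}

open scoped Classical

namespace BruhatAux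

variable {n : ℕ}

/-- `u` fixes everything outside `T`. -/
def FixOut (T : Set (Fin n)) (u : Equiv.Perm (Fin n)) : Prop := ∀ i, i ∉ T → u i = i

/-- Number of `T`-inversions. -/
noncomputable def invT (T : Set (Fin n)) (u : Equiv.Perm (Fin n)) : ℕ :=
  (Finset.univ.filter (fun p : Fin n × Fin n =>
    p.1 ∈ T ∧ p.2 ∈ T ∧ p.1 < p.2 ∧ u p.2 < u p.1)).card

/-- Counting function for the dominance (Ehresmann) order. -/
noncomputable def dT (T : Set (Fin n)) (u : Equiv.Perm (Fin n)) (i k : ℕ) : ℕ :=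
  (Finset.univ.filter (fun c : Fin n => c ∈ T ∧ (c : ℕ) < i ∧ k ≤ (u c : ℕ))).card

/-- Dominance order. -/
def Dom (T : Set (Fin n)) (u v : Equiv.Perm (Fin n)) : Prop :=
  ∀ i k, dT T u i k ≤ dT T v i k

theorem fixOut_one (T : Set (Fin n)) : FixOut T 1 := fun _ _ => rfl

theorem FixOut.mul {T : Set (Fin n)} {u v : Equiv.Perm (Fin n)} (hu : FixOut T u)
    (hv : FixOut T v) : FixOut T (u * v) := fun i hi => by
  simp [Equiv.Perm.mul_apply, hv i hi, hu i hi]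

theorem FixOut.mem_iff {T : Set (Fin n)} {u : Equiv.Perm (Fin n)} (hu : FixOut T u)
    (c : Fin n) : u c ∈ T ↔ c ∈ T := by
  constructor
  · intro h
    by_contra hc
    exact hc (by rwa [hu c hc] at h)
  · intro h
    by_contra hc
    have h2 : u (u c) = u c := hu (u c) hc
    have : u c = c := u.injective h2
    exact hc (by rw [this]; exact h)

theorem FixOut.inv {T : Set (Fin n)} {u : Equiv.Perm (Fin n)} (hu : FixOut T u) :
    FixOut T u⁻¹ := by
  intro i hi
  have := hu i hi
  conv_lhs => rw [← this]
  simp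

/-- Adjacency data: `a, b ∈ T`, `a < b`, nothing of `T` strictly between. -/
structure Conseq (T : Set (Fin n)) (a b : Fin n) : Prop where
  ha : a ∈ T
  hb : b ∈ T
  hab : a < b
  hbtw : ∀ c ∈ T, ¬ (a < c ∧ c < b)

theorem mem_adjOn_iff {T : Set (Fin n)} {g : Equiv.Perm (Fin n)} :
    g ∈ adjTranspositionsOn n T ↔ ∃ a b, Conseq T a b ∧ g = Equiv.swap a b := by
  constructor
  · rintro ⟨a, b, ha, hb, hab, hbtw, rfl⟩
    exact ⟨a, b, ⟨ha, hb, hab, hbtw⟩, rfl⟩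
  · rintro ⟨a, b, ⟨ha, hb, hab, hbtw⟩, rfl⟩
    exact ⟨a, b, ha, hb, hab, hbtw, rfl⟩

theorem fixOut_swap {T : Set (Fin n)} {a b : Fin n} (ha : a ∈ T) (hb : b ∈ T) :
    FixOut T (Equiv.swap a b) := by
  intro i hi
  apply Equiv.swap_apply_of_ne_of_ne
  · rintro rfl; exact hi ha
  · rintro rfl; exact hi hb

/-- The swap of a `T`-consecutive pair preserves the order of all other `T`-pairs. -/
theorem conseq_swap_lt {T : Set (Fin n)} {a b : Fin n} (h : Conseq T a b)
    {p q : Fin n} (hp : p ∈ T) (hq : q ∈ T) (hpq : p < q) (hne : ¬(p = a ∧ q = b)) :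
    Equiv.swap a b p < Equiv.swap a b q := by
  rcases eq_or_ne p a with rfl | hpa
  · rcases eq_or_ne q b with rfl | hqb
    · exact absurd ⟨rfl, rfl⟩ hne
    · rw [Equiv.swap_apply_left, Equiv.swap_apply_of_ne_of_ne (by rintro rfl; exact absurd hpq (lt_irrefl _)) hqb]
      rcases lt_or_gt_of_ne hqb with hlt | hgt
      · exact absurd ⟨hpq, hlt⟩ (h.hbtw q hq)
      · exact hgt
  · rcases eq_or_ne p b with rfl | hpb
    · -- p = b < q, so q ≠ a, q ≠ b
      rw [Equiv.swap_apply_right,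
        Equiv.swap_apply_of_ne_of_ne (by rintro rfl; exact absurd (h.hab.trans hpq) (lt_irrefl _))
          (by rintro rfl; exact absurd hpq (lt_irrefl _))]
      exact h.hab.trans hpq
    · rw [Equiv.swap_apply_of_ne_of_ne hpa hpb]
      rcases eq_or_ne q a with rfl | hqa
      · -- p < a, swap q = b, p < b
        rw [Equiv.swap_apply_left]; exact hpq.trans h.hab
      · rcases eq_or_ne q b with rfl | hqb
        · -- p < b, p ≠ a: p < a (nothing between)
          rw [Equiv.swap_apply_right]
          rcases lt_or_gt_of_ne hpa with hlt | hgt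
          · exact hlt
          · exact absurd ⟨hgt, hpq⟩ (h.hbtw p hp)
        · rw [Equiv.swap_apply_of_ne_of_ne hqa hqb]; exact hpq

theorem invT_mul_swap {T : Set (Fin n)} {a b : Fin n} (h : Conseq T a b)
    (u : Equiv.Perm (Fin n)) :
    invT T (u * Equiv.swap a b) + (if u b < u a then 1 else 0) =
      invT T u + (if u a < u b then 1 else 0) := by
  classical
  set s := Equiv.swap a b with hs
  have hD : ∀ v : Equiv.Perm (Fin n), invT T v =
      ((Finset.univ.filter (fun p : Fin n × Fin n =>
        p.1 ∈ T ∧ p.2 ∈ T ∧ p.1 < p.2 ∧ v p.2 < v p.1)).erase (a, b)).card +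
      (if v b < v a then 1 else 0) := by
    intro v
    set D := Finset.univ.filter (fun p : Fin n × Fin n =>
        p.1 ∈ T ∧ p.2 ∈ T ∧ p.1 < p.2 ∧ v p.2 < v p.1) with hDdef
    have hmem : (a, b) ∈ D ↔ v b < v a := by
      simp [hDdef, h.ha, h.hb, h.hab]
    rw [invT]
    by_cases hab : (a, b) ∈ D
    · rw [if_pos (hmem.mp hab), ← Finset.card_erase_add_one hab]
    · rw [if_neg (fun hlt => hab (hmem.mpr hlt)), Finset.erase_eq_of_notMem hab, add_zero]
  have hswap : ∀ c : Fin n, c ∈ T ↔ s c ∈ T := by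
    intro c
    exact ((fixOut_swap h.ha h.hb).mem_iff c).symm
  have key : ((Finset.univ.filter (fun p : Fin n × Fin n =>
        p.1 ∈ T ∧ p.2 ∈ T ∧ p.1 < p.2 ∧ (u * s) p.2 < (u * s) p.1)).erase (a, b)).card =
      ((Finset.univ.filter (fun p : Fin n × Fin n =>
        p.1 ∈ T ∧ p.2 ∈ T ∧ p.1 < p.2 ∧ u p.2 < u p.1)).erase (a, b)).card := by
    apply Finset.card_bij' (fun p _ => (s p.1, s p.2)) (fun p _ => (s p.1, s p.2))
    · intro p hp
      simp only [Finset.mem_erase, Finset.mem_filter, Finset.mem_univ, true_and] at hp ⊢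
      obtain ⟨hne, h1, h2, h3, h4⟩ := hp
      have hne' : ¬(p.1 = a ∧ p.2 = b) := by
        rintro ⟨e1, e2⟩; exact hne (by rw [Prod.ext_iff]; exact ⟨e1, e2⟩)
      refine ⟨?_, (hswap p.1).mp h1, (hswap p.2).mp h2, conseq_swap_lt h h1 h2 h3 hne', ?_⟩
      · rintro he
        rw [Prod.ext_iff] at he
        obtain ⟨e1, e2⟩ := he
        have hp1 : p.1 = b := by
          have := congrArg s e1; rwa [Equiv.swap_apply_self, hs, Equiv.swap_apply_left] at this
        have hp2 : p.2 = a := by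
          have := congrArg s e2; rwa [Equiv.swap_apply_self, hs, Equiv.swap_apply_right] at this
        rw [hp1, hp2] at h3
        exact absurd (h.hab.trans h3) (lt_irrefl _)
      · simpa [Equiv.Perm.mul_apply] using h4
    · intro p hp
      simp only [Finset.mem_erase, Finset.mem_filter, Finset.mem_univ, true_and] at hp ⊢
      obtain ⟨hne, h1, h2, h3, h4⟩ := hp
      have hne' : ¬(p.1 = a ∧ p.2 = b) := by
        rintro ⟨e1, e2⟩; exact hne (by rw [Prod.ext_iff]; exact ⟨e1, e2⟩)
      refine ⟨?_, (hswap p.1).mp h1, (hswap p.2).mp h2, conseq_swap_lt h h1 h2 h3 hne', ?_⟩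
      · rintro he
        rw [Prod.ext_iff] at he
        obtain ⟨e1, e2⟩ := he
        have hp1 : p.1 = b := by
          have := congrArg s e1; rwa [Equiv.swap_apply_self, hs, Equiv.swap_apply_left] at this
        have hp2 : p.2 = a := by
          have := congrArg s e2; rwa [Equiv.swap_apply_self, hs, Equiv.swap_apply_right] at this
        rw [hp1, hp2] at h3
        exact absurd (h.hab.trans h3) (lt_irrefl _)
      · simp only [Equiv.Perm.mul_apply, hs, Equiv.swap_apply_self]; exact h4
    · intro p _; simp [hs]
    · intro p _; simp [hs]
  rw [hD (u * s), hD u, key]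
  have h1 : (u * s) b = u a := by simp [hs, Equiv.Perm.mul_apply]
  have h2 : (u * s) a = u b := by simp [hs, Equiv.Perm.mul_apply]
  rw [h1, h2]
  split_ifs <;> omega

theorem invT_mul_swap_asc {T : Set (Fin n)} {a b : Fin n} (h : Conseq T a b)
    {u : Equiv.Perm (Fin n)} (hab : u a < u b) :
    invT T (u * Equiv.swap a b) = invT T u + 1 := by
  have := invT_mul_swap h u
  rw [if_pos hab, if_neg (asymm hab)] at this
  omega

theorem invT_mul_swap_desc {T : Set (Fin n)} {a b : Fin n} (h : Conseq T a b)
    {u : Equiv.Perm (Fin n)} (hab : u b < u a) :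
    invT T (u * Equiv.swap a b) + 1 = invT T u := by
  have := invT_mul_swap h u
  rw [if_pos hab, if_neg (asymm hab)] at this
  omega

theorem invT_mul_swap_le {T : Set (Fin n)} {a b : Fin n} (h : Conseq T a b)
    (u : Equiv.Perm (Fin n)) :
    invT T (u * Equiv.swap a b) ≤ invT T u + 1 := by
  have := invT_mul_swap h u
  split_ifs at this <;> omega

theorem invT_one (T : Set (Fin n)) : invT T (1 : Equiv.Perm (Fin n)) = 0 := by
  rw [invT, Finset.card_eq_zero, Finset.filter_eq_empty_iff]
  rintro p -
  rintro ⟨-, -, h1, h2⟩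
  simp only [Equiv.Perm.one_apply] at h2
  exact absurd (h1.trans h2) (lt_irrefl _)

theorem exists_between {T : Set (Fin n)} {a b : Fin n} (ha : a ∈ T) (hb : b ∈ T)
    (hab : a < b) (hnc : ¬ Conseq T a b) : ∃ c ∈ T, a < c ∧ c < b := by
  by_contra hc
  push_neg at hc
  exact hnc ⟨ha, hb, hab, fun c hcT h => absurd h.2 (not_lt.mpr (hc c hcT h.1))⟩

theorem strictMonoOn_of_conseq_asc {T : Set (Fin n)} {u : Equiv.Perm (Fin n)}
    (h : ∀ a b, Conseq T a b → u a < u b) :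
    ∀ a ∈ T, ∀ b ∈ T, a < b → u a < u b := by
  have key : ∀ m : ℕ, ∀ a ∈ T, ∀ b ∈ T, a < b → (b : ℕ) - (a : ℕ) ≤ m → u a < u b := by
    intro m
    induction m with
    | zero =>
      intro a _ b _ hab hle
      have h' : (a : ℕ) < (b : ℕ) := hab
      omega
    | succ m ih =>
      intro a haT b hbT hab hle
      by_cases hc : Conseq T a b
      · exact h a b hc
      · obtain ⟨c, hcT, hac, hcb⟩ := exists_between haT hbT hab hc
        have h1 : u a < u c := ih a haT c hcT hac (by omega)
        have h2 : u c < u b := ih c hcT b hbT hcb (by omega)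
        exact h1.trans h2
  intro a haT b hbT hab
  exact key n a haT b hbT hab (by have := b.isLt; omega)

theorem eq_one_of_strictMonoOn {T : Set (Fin n)} {u : Equiv.Perm (Fin n)}
    (hu : FixOut T u) (h : ∀ a ∈ T, ∀ b ∈ T, a < b → u a < u b) : u = 1 := by
  have key : ∀ m : ℕ, ∀ t : Fin n, (t : ℕ) < m → u t = t := by
    intro m
    induction m using Nat.strong_induction_on with
    | _ m ih =>
      intro t ht
      by_cases htT : t ∈ T
      · have hge : t ≤ u t := by
          by_contra hlt
          push_neg at hlt
          have h1 : u (u t) = u t := ih (t : ℕ) ht (u t) hlt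
          have := u.injective h1
          rw [this] at hlt
          exact absurd hlt (lt_irrefl _)
        rcases eq_or_lt_of_le hge with heq | hlt
        · exact heq.symm
        · exfalso
          set r := u⁻¹ t with hr
          have hur : u r = t := by simp [hr]
          have hrT : r ∈ T := by
            rw [← hu.mem_iff r, hur]; exact htT
          have hrt : t < r := by
            rcases lt_trichotomy r t with h1 | h1 | h1
            · have : u r = r := ih (t : ℕ) ht r h1
              rw [hur] at this
              rw [← this] at h1
              exact absurd h1 (lt_irrefl _)
            · rw [h1] at hur
              rw [hur] at hlt
              exact absurd hlt (lt_irrefl _)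
            · exact h1
          have := h t htT r hrT hrt
          rw [hur] at this
          exact absurd (hlt.trans this) (lt_irrefl _)
      · exact hu t htT
  apply Equiv.ext
  intro t
  rw [Equiv.Perm.one_apply]
  exact key n t t.isLt

theorem exists_descent {T : Set (Fin n)} {u : Equiv.Perm (Fin n)} (hu : FixOut T u)
    (hne : u ≠ 1) : ∃ a b, Conseq T a b ∧ u b < u a := by
  by_contra hc
  push_neg at hc
  apply hne
  apply eq_one_of_strictMonoOn hu
  apply strictMonoOn_of_conseq_asc
  intro a b hcons
  have hne' : u a ≠ u b := fun he => absurd (u.injective he) (ne_of_lt hcons.hab)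
  rcases lt_or_gt_of_ne hne' with h1 | h1
  · exact h1
  · exact absurd h1 (not_lt.mpr (hc a b hcons))

theorem invT_pos_of_descent {T : Set (Fin n)} {u : Equiv.Perm (Fin n)} {a b : Fin n}
    (h : Conseq T a b) (hd : u b < u a) : 0 < invT T u := by
  rw [invT, Finset.card_pos]
  exact ⟨(a, b), by simp [h.ha, h.hb, h.hab, hd]⟩

theorem fixOut_prod {T : Set (Fin n)} {l : List (Equiv.Perm (Fin n))}
    (h : ∀ g ∈ l, g ∈ adjTranspositionsOn n T) : FixOut T l.prod := by
  induction l with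
  | nil => exact fixOut_one T
  | cons g l ih =>
    rw [List.prod_cons]
    obtain ⟨a, b, hc, rfl⟩ := mem_adjOn_iff.mp (h g (List.mem_cons_self))
    exact (fixOut_swap hc.ha hc.hb).mul (ih fun g hg => h g (List.mem_cons_of_mem _ hg))

theorem invT_prod_le {T : Set (Fin n)} {l : List (Equiv.Perm (Fin n))}
    (h : ∀ g ∈ l, g ∈ adjTranspositionsOn n T) : invT T l.prod ≤ l.length := by
  induction l using List.reverseRecOn with
  | nil => simp [invT_one]
  | append_singleton l g ih =>
    rw [List.prod_append, List.prod_singleton, List.length_append, List.length_singleton]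
    obtain ⟨a, b, hc, rfl⟩ := mem_adjOn_iff.mp (h g (by simp))
    have h1 := invT_mul_swap_le hc l.prod
    have h2 := ih fun g hg => h g (by simp [hg])
    omega

theorem exists_word {T : Set (Fin n)} {u : Equiv.Perm (Fin n)} (hu : FixOut T u) :
    ∃ l : List (Equiv.Perm (Fin n)), (∀ g ∈ l, g ∈ adjTranspositionsOn n T) ∧
      l.prod = u ∧ l.length = invT T u := by
  generalize hm : invT T u = m
  induction m using Nat.strong_induction_on generalizing u with
  | _ m ih =>
    rcases Nat.eq_zero_or_pos m with rfl | hpos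
    · have : u = 1 := by
        by_contra hne
        obtain ⟨a, b, hc, hd⟩ := exists_descent hu hne
        have := invT_pos_of_descent hc hd
        omega
      subst this
      exact ⟨[], by simp, by simp, by simp [hm]⟩
    · have hne : u ≠ 1 := by
        rintro rfl
        rw [invT_one] at hm
        omega
      obtain ⟨a, b, hc, hd⟩ := exists_descent hu hne
      have hdec := invT_mul_swap_desc hc hd
      have hfix : FixOut T (u * Equiv.swap a b) := hu.mul (fixOut_swap hc.ha hc.hb)
      obtain ⟨l, hl1, hl2, hl3⟩ := ih (invT T (u * Equiv.swap a b)) (by omega) hfix rfl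
      refine ⟨l ++ [Equiv.swap a b], ?_, ?_, ?_⟩
      · intro g hg
        rcases List.mem_append.mp hg with h1 | h1
        · exact hl1 g h1
        · rw [List.mem_singleton] at h1
          subst h1
          exact mem_adjOn_iff.mpr ⟨a, b, hc, rfl⟩
      · rw [List.prod_append, List.prod_singleton, hl2, mul_assoc]
        simp [Equiv.swap_mul_self]
      · rw [List.length_append, List.length_singleton, hl3]
        omega

theorem lengthWrt_eq_invT {T : Set (Fin n)} {u : Equiv.Perm (Fin n)} (hu : FixOut T u) :
    lengthWrt (adjTranspositionsOn n T) u = invT T u := by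
  apply le_antisymm
  · obtain ⟨l, h1, h2, h3⟩ := exists_word hu
    exact Nat.sInf_le ⟨l, h1, h2, h3⟩
  · apply le_csInf
    · obtain ⟨l, h1, h2, h3⟩ := exists_word hu
      exact ⟨invT T u, l, h1, h2, h3⟩
    · rintro k ⟨l, h1, h2, h3⟩
      rw [← h3, ← h2]
      exact invT_prod_le h1

theorem isRed_iff {T : Set (Fin n)} {l : List (Equiv.Perm (Fin n))} :
    IsReducedWordWrt (adjTranspositionsOn n T) l ↔
      (∀ g ∈ l, g ∈ adjTranspositionsOn n T) ∧ invT T l.prod = l.length := by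
  constructor
  · rintro ⟨h1, h2⟩
    rw [lengthWrt_eq_invT (fixOut_prod h1)] at h2
    exact ⟨h1, h2⟩
  · rintro ⟨h1, h2⟩
    exact ⟨h1, by rw [lengthWrt_eq_invT (fixOut_prod h1)]; exact h2⟩

theorem reduced_concat_iff {T : Set (Fin n)} {ω : List (Equiv.Perm (Fin n))}
    {g : Equiv.Perm (Fin n)} (hω : ∀ x ∈ ω, x ∈ adjTranspositionsOn n T)
    (hg : g ∈ adjTranspositionsOn n T) :
    IsReducedWordWrt (adjTranspositionsOn n T) (ω ++ [g]) ↔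
      IsReducedWordWrt (adjTranspositionsOn n T) ω ∧
        invT T (ω.prod * g) = invT T ω.prod + 1 := by
  have hall : ∀ x ∈ ω ++ [g], x ∈ adjTranspositionsOn n T := by
    intro x hx
    rcases List.mem_append.mp hx with h1 | h1
    · exact hω x h1
    · rw [List.mem_singleton] at h1; subst h1; exact hg
  obtain ⟨a, b, hc, rfl⟩ := mem_adjOn_iff.mp hg
  rw [isRed_iff, isRed_iff]
  rw [List.prod_append, List.prod_singleton, List.length_append, List.length_singleton]
  have h1 := invT_mul_swap_le hc ω.prod
  have h2 := invT_prod_le hω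
  constructor
  · rintro ⟨-, h3⟩
    exact ⟨⟨hω, by omega⟩, by omega⟩
  · rintro ⟨⟨-, h3⟩, h4⟩
    exact ⟨hall, by omega⟩

theorem dT_mul_swap_of {T : Set (Fin n)} {a b : Fin n} (h : Conseq T a b)
    (u : Equiv.Perm (Fin n)) {i k : ℕ} (hi : i ≤ (a : ℕ) ∨ (b : ℕ) < i) :
    dT T (u * Equiv.swap a b) i k = dT T u i k := by
  classical
  set s := Equiv.swap a b with hs
  have hsT : ∀ c : Fin n, c ∈ T ↔ s c ∈ T := fun c => ((fixOut_swap h.ha h.hb).mem_iff c).symm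
  have hsi : ∀ c : Fin n, (c : ℕ) < i → ((s c : Fin n) : ℕ) < i := by
    intro c hc
    rcases hi with hi | hi
    · have hab' : (a : ℕ) < (b : ℕ) := h.hab
      have hca : c ≠ a := fun he => by
        have : (c : ℕ) = (a : ℕ) := congrArg Fin.val he
        omega
      have hcb : c ≠ b := fun he => by
        have : (c : ℕ) = (b : ℕ) := congrArg Fin.val he
        omega
      rw [hs, Equiv.swap_apply_of_ne_of_ne hca hcb]
      exact hc
    · rcases eq_or_ne c a with hca | hca
      · rw [hca, hs, Equiv.swap_apply_left]; omega
      · rcases eq_or_ne c b with hcb | hcb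
        · rw [hcb, hs, Equiv.swap_apply_right]
          have : (a : ℕ) < (b : ℕ) := h.hab
          omega
        · rw [hs, Equiv.swap_apply_of_ne_of_ne hca hcb]; exact hc
  rw [dT, dT]
  apply Finset.card_bij' (fun c _ => s c) (fun c _ => s c)
  · intro c hc
    simp only [Finset.mem_filter, Finset.mem_univ, true_and] at hc ⊢
    obtain ⟨h1, h2, h3⟩ := hc
    refine ⟨(hsT c).mp h1, hsi c h2, ?_⟩
    simpa [Equiv.Perm.mul_apply] using h3
  · intro c hc
    simp only [Finset.mem_filter, Finset.mem_univ, true_and] at hc ⊢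
    obtain ⟨h1, h2, h3⟩ := hc
    refine ⟨(hsT c).mp h1, hsi c h2, ?_⟩
    simp only [Equiv.Perm.mul_apply, hs, Equiv.swap_apply_self]
    exact h3
  · intro c _; simp [hs]
  · intro c _; simp [hs]

theorem dT_succ {T : Set (Fin n)} (u : Equiv.Perm (Fin n)) (e : Fin n) (k : ℕ) :
    dT T u ((e : ℕ) + 1) k =
      dT T u (e : ℕ) k + (if e ∈ T ∧ k ≤ (u e : ℕ) then 1 else 0) := by
  classical
  rw [dT, dT]
  by_cases he : e ∈ T ∧ k ≤ (u e : ℕ)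
  · rw [if_pos he]
    have hset : (Finset.univ.filter (fun c : Fin n => c ∈ T ∧ (c : ℕ) < (e : ℕ) + 1 ∧ k ≤ (u c : ℕ)))
        = insert e (Finset.univ.filter (fun c : Fin n => c ∈ T ∧ (c : ℕ) < (e : ℕ) ∧ k ≤ (u c : ℕ))) := by
      ext c
      simp only [Finset.mem_filter, Finset.mem_univ, true_and, Finset.mem_insert]
      constructor
      · rintro ⟨h1, h2, h3⟩
        rcases Nat.lt_succ_iff_lt_or_eq.mp h2 with h2 | h2
        · exact Or.inr ⟨h1, h2, h3⟩
        · exact Or.inl (Fin.ext h2)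
      · rintro (rfl | ⟨h1, h2, h3⟩)
        · exact ⟨he.1, by omega, he.2⟩
        · exact ⟨h1, by omega, h3⟩
    rw [hset, Finset.card_insert_of_notMem (by simp)]
  · rw [if_neg he, add_zero]
    congr 1
    ext c
    simp only [Finset.mem_filter, Finset.mem_univ, true_and]
    constructor
    · rintro ⟨h1, h2, h3⟩
      refine ⟨h1, ?_, h3⟩
      rcases Nat.lt_succ_iff_lt_or_eq.mp h2 with h2' | h2'
      · exact h2'
      · exfalso
        have hce : c = e := Fin.ext h2'
        subst hce
        exact he ⟨h1, h3⟩
    · rintro ⟨h1, h2, h3⟩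
      exact ⟨h1, by omega, h3⟩

theorem dT_gap {T : Set (Fin n)} {a b : Fin n} (h : Conseq T a b)
    (u : Equiv.Perm (Fin n)) {i k : ℕ} (hai : (a : ℕ) < i) (hib : i ≤ (b : ℕ)) :
    dT T u i k = dT T u ((a : ℕ) + 1) k := by
  classical
  rw [dT, dT]
  congr 1
  ext c
  simp only [Finset.mem_filter, Finset.mem_univ, true_and]
  constructor
  · rintro ⟨h1, h2, h3⟩
    refine ⟨h1, ?_, h3⟩
    by_contra hc
    push_neg at hc
    have hac : a < c := by
      rw [Fin.lt_def]; omega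
    have hcb : c < b := by
      rw [Fin.lt_def]; omega
    exact h.hbtw c h1 ⟨hac, hcb⟩
  · rintro ⟨h1, h2, h3⟩
    exact ⟨h1, by omega, h3⟩

theorem dT_of_mem_Ioc {T : Set (Fin n)} {a b : Fin n} (h : Conseq T a b)
    (u : Equiv.Perm (Fin n)) {i k : ℕ} (hai : (a : ℕ) < i) (hib : i ≤ (b : ℕ)) :
    dT T u i k = dT T u (a : ℕ) k + (if k ≤ (u a : ℕ) then 1 else 0) := by
  rw [dT_gap h u hai hib, dT_succ u a k]
  simp [h.ha]

theorem dT_b_succ {T : Set (Fin n)} {a b : Fin n} (h : Conseq T a b)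
    (u : Equiv.Perm (Fin n)) (k : ℕ) :
    dT T u ((b : ℕ) + 1) k = dT T u (a : ℕ) k +
      (if k ≤ (u a : ℕ) then 1 else 0) + (if k ≤ (u b : ℕ) then 1 else 0) := by
  have hab : (a : ℕ) < (b : ℕ) := h.hab
  rw [dT_succ u b k, dT_of_mem_Ioc h u hab (le_refl _)]
  simp [h.hb]

theorem mul_swap_apply_left {a b : Fin n} (u : Equiv.Perm (Fin n)) :
    (u * Equiv.swap a b) a = u b := by simp [Equiv.Perm.mul_apply]

theorem mul_swap_apply_right {a b : Fin n} (u : Equiv.Perm (Fin n)) :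
    (u * Equiv.swap a b) b = u a := by simp [Equiv.Perm.mul_apply]

theorem dom_self_mul_swap {T : Set (Fin n)} {a b : Fin n} (h : Conseq T a b)
    {u : Equiv.Perm (Fin n)} (hasc : u a < u b) : Dom T u (u * Equiv.swap a b) := by
  intro i k
  by_cases hi : i ≤ (a : ℕ) ∨ (b : ℕ) < i
  · rw [dT_mul_swap_of h u hi]
  · push_neg at hi
    rw [dT_of_mem_Ioc h u hi.1 hi.2, dT_of_mem_Ioc h (u * Equiv.swap a b) hi.1 hi.2,
      dT_mul_swap_of h u (Or.inl (le_refl _)), mul_swap_apply_left]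
    have : (u a : ℕ) < (u b : ℕ) := hasc
    split_ifs <;> omega

theorem dom_mul_swap {T : Set (Fin n)} {a b : Fin n} (h : Conseq T a b)
    {u v : Equiv.Perm (Fin n)} (hDom : Dom T u v) (hor : (u a < u b) ↔ (v a < v b))
    (hua : u a ≠ u b) (hva : v a ≠ v b) :
    Dom T (u * Equiv.swap a b) (v * Equiv.swap a b) := by
  intro i k
  by_cases hi : i ≤ (a : ℕ) ∨ (b : ℕ) < i
  · rw [dT_mul_swap_of h u hi, dT_mul_swap_of h v hi]
    exact hDom i k
  · push_neg at hi
    rw [dT_of_mem_Ioc h (u * Equiv.swap a b) hi.1 hi.2,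
      dT_of_mem_Ioc h (v * Equiv.swap a b) hi.1 hi.2,
      dT_mul_swap_of h u (Or.inl (le_refl _)), dT_mul_swap_of h v (Or.inl (le_refl _)),
      mul_swap_apply_left, mul_swap_apply_left]
    have e1 := hDom (a : ℕ) k
    have e2 := hDom i k
    rw [dT_of_mem_Ioc h u hi.1 hi.2, dT_of_mem_Ioc h v hi.1 hi.2] at e2
    have e3 := hDom ((b : ℕ) + 1) k
    rw [dT_b_succ h u k, dT_b_succ h v k] at e3
    have huv : ((u a : ℕ) < (u b : ℕ)) ↔ ((v a : ℕ) < (v b : ℕ)) := hor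
    have hua' : (u a : ℕ) ≠ (u b : ℕ) := fun he => hua (Fin.ext he)
    have hva' : (v a : ℕ) ≠ (v b : ℕ) := fun he => hva (Fin.ext he)
    split_ifs at e2 e3 ⊢ <;> omega

theorem dom_mul_swap_right {T : Set (Fin n)} {a b : Fin n} (h : Conseq T a b)
    {u v : Equiv.Perm (Fin n)} (hDom : Dom T u v) (huasc : u a < u b) (hvdesc : v b < v a) :
    Dom T u (v * Equiv.swap a b) := by
  intro i k
  by_cases hi : i ≤ (a : ℕ) ∨ (b : ℕ) < i
  · rw [dT_mul_swap_of h v hi]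
    exact hDom i k
  · push_neg at hi
    rw [dT_of_mem_Ioc h u hi.1 hi.2, dT_of_mem_Ioc h (v * Equiv.swap a b) hi.1 hi.2,
      dT_mul_swap_of h v (Or.inl (le_refl _)), mul_swap_apply_left]
    have e1 := hDom (a : ℕ) k
    have e2 := hDom i k
    rw [dT_of_mem_Ioc h u hi.1 hi.2, dT_of_mem_Ioc h v hi.1 hi.2] at e2
    have e3 := hDom ((b : ℕ) + 1) k
    rw [dT_b_succ h u k, dT_b_succ h v k] at e3
    have h1 : (u a : ℕ) < (u b : ℕ) := huasc
    have h2 : (v b : ℕ) < (v a : ℕ) := hvdesc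
    split_ifs at e2 e3 ⊢ <;> omega

theorem dom_refl {T : Set (Fin n)} (u : Equiv.Perm (Fin n)) : Dom T u u :=
  fun _ _ => le_refl _

theorem Dom.trans {T : Set (Fin n)} {u v x : Equiv.Perm (Fin n)} (h1 : Dom T u v)
    (h2 : Dom T v x) : Dom T u x := fun i k => (h1 i k).trans (h2 i k)

theorem exists_lt_apply {u : Equiv.Perm (Fin n)} (hne : u ≠ 1) : ∃ t, t < u t := by
  classical
  have hne' : ∃ t, u t ≠ t := by
    by_contra hc
    push_neg at hc
    exact hne (Equiv.ext fun t => hc t)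
  set M := Finset.univ.filter (fun t : Fin n => u t ≠ t) with hM
  have hMne : M.Nonempty := by
    obtain ⟨t, ht⟩ := hne'
    exact ⟨t, by simp [hM, ht]⟩
  set t₀ := M.min' hMne with ht0
  have ht₀M : t₀ ∈ M := M.min'_mem hMne
  have hmoved : u t₀ ≠ t₀ := by
    simpa [hM] using ht₀M
  refine ⟨t₀, ?_⟩
  rcases lt_or_gt_of_ne hmoved with hlt | hgt
  · exfalso
    have hmem : u t₀ ∈ M := by
      simp only [hM, Finset.mem_filter, Finset.mem_univ, true_and]
      intro he
      exact hmoved (u.injective he)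
    have := M.min'_le (u t₀) hmem
    rw [← ht0] at this
    exact absurd (lt_of_le_of_lt this hlt) (lt_irrefl _)
  · exact hgt

theorem eq_one_of_dom_one {T : Set (Fin n)} {u : Equiv.Perm (Fin n)} (hu : FixOut T u)
    (hDom : Dom T u 1) : u = 1 := by
  classical
  by_contra hne
  obtain ⟨t, ht⟩ := exists_lt_apply hne
  have htT : t ∈ T := by
    by_contra hc
    rw [hu t hc] at ht
    exact absurd ht (lt_irrefl _)
  have h1 : 1 ≤ dT T u ((t : ℕ) + 1) ((u t : ℕ)) := by
    rw [Nat.one_le_iff_ne_zero, dT, ← Nat.pos_iff_ne_zero, Finset.card_pos]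
    exact ⟨t, by simp [htT]⟩
  have h2 : dT T (1 : Equiv.Perm (Fin n)) ((t : ℕ) + 1) ((u t : ℕ)) = 0 := by
    rw [dT, Finset.card_eq_zero, Finset.filter_eq_empty_iff]
    rintro c -
    rintro ⟨-, hlt, hge⟩
    simp only [Equiv.Perm.one_apply] at hge
    have : (t : ℕ) < (u t : ℕ) := ht
    omega
  have := (hDom ((t : ℕ) + 1) ((u t : ℕ)))
  omega

theorem bruhat_of_dom {T : Set (Fin n)} {u v : Equiv.Perm (Fin n)} (hu : FixOut T u)
    (hv : FixOut T v) (hDom : Dom T u v) : bruhatLEWrt (adjTranspositionsOn n T) u v := by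
  generalize hm : invT T v = m
  induction m using Nat.strong_induction_on generalizing u v with
  | _ m ih =>
    rcases Nat.eq_zero_or_pos m with rfl | hpos
    · have hv1 : v = 1 := by
        by_contra hne
        obtain ⟨a, b, hc, hd⟩ := exists_descent hv hne
        have := invT_pos_of_descent hc hd
        omega
      subst hv1
      have hu1 : u = 1 := eq_one_of_dom_one hu hDom
      subst hu1
      have hred : IsReducedWordWrt (adjTranspositionsOn n T) ([] : List (Equiv.Perm (Fin n))) := by
        refine ⟨by simp, ?_⟩
        rw [List.prod_nil, List.length_nil, lengthWrt_eq_invT (fixOut_one T), invT_one]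
      exact ⟨[], hred, by simp, [], List.Sublist.refl _, hred, by simp⟩
    · have hne : v ≠ 1 := by
        rintro rfl
        rw [invT_one] at hm
        omega
      obtain ⟨a, b, hc, hd⟩ := exists_descent hv hne
      set s := Equiv.swap a b with hs
      have hsmem : s ∈ adjTranspositionsOn n T := mem_adjOn_iff.mpr ⟨a, b, hc, rfl⟩
      have hdec : invT T (v * s) + 1 = invT T v := invT_mul_swap_desc hc hd
      have hvs : FixOut T (v * s) := hv.mul (fixOut_swap hc.ha hc.hb)
      have hvss : v * s * s = v := by
        rw [mul_assoc, hs, Equiv.swap_mul_self, mul_one]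
      have huab : u a ≠ u b := fun he => absurd (u.injective he) (ne_of_lt hc.hab)
      have hvab : v a ≠ v b := fun he => absurd (v.injective he) (ne_of_lt hc.hab)
      rcases lt_or_gt_of_ne huab with huasc | hudesc
      · -- u ascent: Dom u (v*s)
        have hDom' : Dom T u (v * s) := dom_mul_swap_right hc hDom huasc hd
        obtain ⟨ω, hred, hprod, l', hsub, hred', hprod'⟩ :=
          ih (invT T (v * s)) (by omega) hu hvs hDom' rfl
        refine ⟨ω ++ [s], ?_, ?_, l', hsub.trans (List.sublist_append_left ω [s]), hred', hprod'⟩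
        · rw [reduced_concat_iff hred.1 hsmem]
          refine ⟨hred, ?_⟩
          rw [hprod, hvss]
          omega
        · rw [List.prod_append, List.prod_singleton, hprod, hvss]
      · -- u descent: Dom (u*s) (v*s)
        have hor : (u a < u b) ↔ (v a < v b) :=
          iff_of_false (asymm hudesc) (asymm hd)
        have hDom' : Dom T (u * s) (v * s) := dom_mul_swap hc hDom hor huab hvab
        have hus : FixOut T (u * s) := hu.mul (fixOut_swap hc.ha hc.hb)
        obtain ⟨ω, hred, hprod, l', hsub, hred', hprod'⟩ :=
          ih (invT T (v * s)) (by omega) hus hvs hDom' rfl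
        have huss : u * s * s = u := by
          rw [mul_assoc, hs, Equiv.swap_mul_self, mul_one]
        have hudec : invT T (u * s) + 1 = invT T u := invT_mul_swap_desc hc hudesc
        refine ⟨ω ++ [s], ?_, ?_, l' ++ [s], hsub.append (List.Sublist.refl [s]), ?_, ?_⟩
        · rw [reduced_concat_iff hred.1 hsmem]
          refine ⟨hred, ?_⟩
          rw [hprod, hvss]
          omega
        · rw [List.prod_append, List.prod_singleton, hprod, hvss]
        · rw [reduced_concat_iff hred'.1 hsmem]
          refine ⟨hred', ?_⟩
          rw [hprod', huss]
          omega
        · rw [List.prod_append, List.prod_singleton, hprod', huss]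

theorem dom_of_sublist {T : Set (Fin n)} {l l' : List (Equiv.Perm (Fin n))}
    (hred : IsReducedWordWrt (adjTranspositionsOn n T) l) (hsub : l'.Sublist l)
    (hred' : IsReducedWordWrt (adjTranspositionsOn n T) l') : Dom T l'.prod l.prod := by
  induction l using List.reverseRecOn generalizing l' with
  | nil =>
    rw [List.sublist_nil] at hsub
    subst hsub
    exact dom_refl _
  | append_singleton ω g ihl =>
    have hω : ∀ x ∈ ω, x ∈ adjTranspositionsOn n T :=
      fun x hx => hred.1 x (List.mem_append.mpr (Or.inl hx))
    have hg : g ∈ adjTranspositionsOn n T := hred.1 g (by simp)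
    obtain ⟨a, b, hc, hgs⟩ := mem_adjOn_iff.mp hg
    obtain ⟨hredω, hinc⟩ := (reduced_concat_iff hω hg).mp hred
    have hωab : ω.prod a ≠ ω.prod b := fun he => absurd (ω.prod.injective he) (ne_of_lt hc.hab)
    have hasc : ω.prod a < ω.prod b := by
      rcases lt_or_gt_of_ne hωab with h1 | h1
      · exact h1
      · exfalso
        have := invT_mul_swap_desc hc h1
        rw [hgs] at hinc
        omega
    rw [List.prod_append, List.prod_singleton]
    rcases List.sublist_append_iff.mp hsub with ⟨x, y, rfl, hx, hy⟩
    have hy' : y = [] ∨ y = [g] := List.sublist_singleton.mp hy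
    rcases hy' with rfl | rfl
    · rw [List.append_nil] at hred' ⊢
      have h1 := ihl hredω hx hred'
      have h2 : Dom T ω.prod (ω.prod * g) := by
        rw [hgs]; exact dom_self_mul_swap hc hasc
      exact h1.trans h2
    · have hxl : ∀ c ∈ x, c ∈ adjTranspositionsOn n T :=
        fun c hcm => hred'.1 c (List.mem_append.mpr (Or.inl hcm))
      obtain ⟨hredx, hincx⟩ := (reduced_concat_iff hxl hg).mp hred'
      have hxab : x.prod a ≠ x.prod b := fun he => absurd (x.prod.injective he) (ne_of_lt hc.hab)
      have hascx : x.prod a < x.prod b := by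
        rcases lt_or_gt_of_ne hxab with h1 | h1
        · exact h1
        · exfalso
          have := invT_mul_swap_desc hc h1
          rw [hgs] at hincx
          omega
      have h1 := ihl hredω hx hredx
      rw [List.prod_append, List.prod_singleton, hgs]
      exact dom_mul_swap hc h1 (iff_of_true hascx hasc) hxab hωab

theorem adj_eq_adjOn_univ : adjTranspositions n = adjTranspositionsOn n Set.univ := by
  ext g
  constructor
  · rintro ⟨i, j, hij, rfl⟩
    have hlt : i < j := by rw [Fin.lt_def]; omega
    refine ⟨i, j, Set.mem_univ _, Set.mem_univ _, hlt, ?_, rfl⟩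
    rintro c - ⟨h1, h2⟩
    rw [Fin.lt_def] at h1 h2
    omega
  · rintro ⟨a, b, -, -, hab, hbtw, rfl⟩
    refine ⟨a, b, ?_, rfl⟩
    have h1 : (a : ℕ) < (b : ℕ) := hab
    by_contra hc
    have h2 : (a : ℕ) + 1 < (b : ℕ) := by omega
    have hn : (a : ℕ) + 1 < n := lt_trans h2 b.isLt
    refine hbtw ⟨(a : ℕ) + 1, hn⟩ (Set.mem_univ _) ⟨?_, ?_⟩
    · rw [Fin.lt_def]; simp
    · rw [Fin.lt_def]; simpa using h2

section Coset

variable {S : Set (Fin n)} {w : Equiv.Perm (Fin n)}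

theorem winv_le_iff (hw : ∀ i ∈ S, ∀ j ∈ S, i < j → w⁻¹ i < w⁻¹ j)
    {b m : Fin n} (hb : b ∈ S) (hm : m ∈ S) :
    (b : ℕ) ≤ (m : ℕ) ↔ ((w⁻¹ b : Fin n) : ℕ) ≤ ((w⁻¹ m : Fin n) : ℕ) := by
  constructor
  · intro h
    rcases eq_or_lt_of_le h with he | hlt
    · rw [Fin.ext he]
    · exact le_of_lt (hw b hb m hm (by rwa [Fin.lt_def]))
  · intro h
    by_contra hc
    push_neg at hc
    have := hw m hm b hb (by rwa [Fin.lt_def])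
    rw [Fin.lt_def] at this
    omega

theorem dT_univ_split (z : Equiv.Perm (Fin n)) (hz : FixOut S z) (i k : ℕ) :
    dT Set.univ (z * w) i k =
      (Finset.univ.filter (fun b : Fin n =>
        b ∈ S ∧ ((w⁻¹ b : Fin n) : ℕ) < i ∧ k ≤ ((z b : Fin n) : ℕ))).card +
      (Finset.univ.filter (fun b : Fin n =>
        b ∉ S ∧ ((w⁻¹ b : Fin n) : ℕ) < i ∧ k ≤ (b : ℕ))).card := by
  classical
  have hre : dT Set.univ (z * w) i k = (Finset.univ.filter (fun b : Fin n =>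
      ((w⁻¹ b : Fin n) : ℕ) < i ∧ k ≤ ((z b : Fin n) : ℕ))).card := by
    rw [dT]
    apply Finset.card_bij' (fun c _ => w c) (fun b _ => w⁻¹ b)
    · intro c hc
      simp only [Finset.mem_filter, Finset.mem_univ, true_and] at hc ⊢
      obtain ⟨-, h2, h3⟩ := hc
      simp only [Equiv.Perm.inv_def, Equiv.symm_apply_apply]
      exact ⟨h2, by simpa [Equiv.Perm.mul_apply] using h3⟩
    · intro b hb
      simp only [Finset.mem_filter, Finset.mem_univ, true_and] at hb ⊢
      obtain ⟨h2, h3⟩ := hb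
      refine ⟨Set.mem_univ _, h2, ?_⟩
      simpa [Equiv.Perm.mul_apply] using h3
    · intro c _; simp
    · intro b _; simp
  rw [hre]
  have hsplit := Finset.card_filter_add_card_filter_not
    (s := Finset.univ.filter (fun b : Fin n =>
      ((w⁻¹ b : Fin n) : ℕ) < i ∧ k ≤ ((z b : Fin n) : ℕ))) (p := fun b => b ∈ S)
  rw [Finset.filter_filter, Finset.filter_filter] at hsplit
  rw [← hsplit]
  congr 1
  · congr 1
    ext b
    simp only [Finset.mem_filter, Finset.mem_univ, true_and]
    tauto
  · congr 1
    ext b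
    simp only [Finset.mem_filter, Finset.mem_univ, true_and]
    constructor
    · rintro ⟨⟨h1, h2⟩, h3⟩
      rw [hz b h3] at h2
      exact ⟨h3, h1, h2⟩
    · rintro ⟨h3, h1, h2⟩
      rw [← hz b h3] at h2
      exact ⟨⟨h1, h2⟩, h3⟩

theorem dom_coset_iff (hw : ∀ i ∈ S, ∀ j ∈ S, i < j → w⁻¹ i < w⁻¹ j)
    {x y : Equiv.Perm (Fin n)} (hx : FixOut S x) (hy : FixOut S y) :
    Dom Set.univ (x * w) (y * w) ↔ Dom S x y := by
  classical
  constructor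
  · intro hD j k
    rw [dT, dT]
    set G := Finset.univ.filter (fun b : Fin n => b ∈ S ∧ (b : ℕ) < j) with hG
    by_cases hGne : G.Nonempty
    · set m := G.max' hGne with hmdef
      have hmG : m ∈ G := G.max'_mem hGne
      simp only [hG, Finset.mem_filter, Finset.mem_univ, true_and] at hmG
      have key : ∀ b : Fin n, (b ∈ S ∧ (b : ℕ) < j) ↔
          (b ∈ S ∧ ((w⁻¹ b : Fin n) : ℕ) < ((w⁻¹ m : Fin n) : ℕ) + 1) := by
        intro b
        constructor
        · rintro ⟨h1, h2⟩
          refine ⟨h1, ?_⟩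
          have hble : b ∈ G := by simp [hG, h1, h2]
          have := G.le_max' b hble
          rw [← hmdef] at this
          have h3 := (winv_le_iff hw h1 hmG.1).mp this
          omega
        · rintro ⟨h1, h2⟩
          refine ⟨h1, ?_⟩
          have h3 : ((w⁻¹ b : Fin n) : ℕ) ≤ ((w⁻¹ m : Fin n) : ℕ) := by omega
          have h4 := (winv_le_iff hw h1 hmG.1).mpr h3
          omega
      have hrw : ∀ z : Equiv.Perm (Fin n),
          (Finset.univ.filter (fun c : Fin n => c ∈ S ∧ (c : ℕ) < j ∧ k ≤ ((z c : Fin n) : ℕ))).card =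
          (Finset.univ.filter (fun b : Fin n =>
            b ∈ S ∧ ((w⁻¹ b : Fin n) : ℕ) < ((w⁻¹ m : Fin n) : ℕ) + 1 ∧ k ≤ ((z b : Fin n) : ℕ))).card := by
        intro z
        congr 1
        ext b
        simp only [Finset.mem_filter, Finset.mem_univ, true_and]
        have := key b
        tauto
      rw [hrw x, hrw y]
      have hD' := hD (((w⁻¹ m : Fin n) : ℕ) + 1) k
      rw [dT_univ_split x hx, dT_univ_split y hy] at hD'
      omega
    · have hz : ∀ z : Equiv.Perm (Fin n),
          (Finset.univ.filter (fun c : Fin n => c ∈ S ∧ (c : ℕ) < j ∧ k ≤ ((z c : Fin n) : ℕ))).card = 0 := by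
        intro z
        rw [Finset.card_eq_zero, Finset.filter_eq_empty_iff]
        rintro b -
        rintro ⟨h1, h2, -⟩
        exact hGne ⟨b, by simp [hG, h1, h2]⟩
      rw [hz x, hz y]
  · intro hD i k
    rw [dT_univ_split x hx, dT_univ_split y hy]
    set F := Finset.univ.filter (fun b : Fin n => b ∈ S ∧ ((w⁻¹ b : Fin n) : ℕ) < i) with hF
    by_cases hFne : F.Nonempty
    · set m := F.max' hFne with hmdef
      have hmF : m ∈ F := F.max'_mem hFne
      simp only [hF, Finset.mem_filter, Finset.mem_univ, true_and] at hmF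
      have key : ∀ b : Fin n, (b ∈ S ∧ ((w⁻¹ b : Fin n) : ℕ) < i) ↔
          (b ∈ S ∧ (b : ℕ) < (m : ℕ) + 1) := by
        intro b
        constructor
        · rintro ⟨h1, h2⟩
          refine ⟨h1, ?_⟩
          have hble : b ∈ F := by simp [hF, h1]; exact h2
          have h3 := F.le_max' b hble
          rw [← hmdef] at h3
          have h4 : (b : ℕ) ≤ (m : ℕ) := h3
          omega
        · rintro ⟨h1, h2⟩
          refine ⟨h1, ?_⟩
          have h3 : (b : ℕ) ≤ (m : ℕ) := by omega
          have h4 := (winv_le_iff hw h1 hmF.1).mp h3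
          omega
      have hrw : ∀ z : Equiv.Perm (Fin n),
          (Finset.univ.filter (fun b : Fin n =>
            b ∈ S ∧ ((w⁻¹ b : Fin n) : ℕ) < i ∧ k ≤ ((z b : Fin n) : ℕ))).card =
          dT S z ((m : ℕ) + 1) k := by
        intro z
        rw [dT]
        congr 1
        ext b
        simp only [Finset.mem_filter, Finset.mem_univ, true_and]
        have := key b
        tauto
      rw [hrw x, hrw y]
      have := hD ((m : ℕ) + 1) k
      omega
    · have hz : ∀ z : Equiv.Perm (Fin n),
          (Finset.univ.filter (fun b : Fin n =>
            b ∈ S ∧ ((w⁻¹ b : Fin n) : ℕ) < i ∧ k ≤ ((z b : Fin n) : ℕ))).card = 0 := by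
        intro z
        rw [Finset.card_eq_zero, Finset.filter_eq_empty_iff]
        rintro b -
        rintro ⟨h1, h2, -⟩
        exact hFne ⟨b, by simp [hF, h1]; exact h2⟩
      rw [hz x, hz y]

end Coset

end BruhatAux


/-- Proposition 7.3.3: for `w` with `w⁻¹` increasing on `S` and `x, y ∈ Sym(S)`,
`xw ≤ yw` in the Bruhat order of `Sym(n)` iff `x ≤_S y` in the Bruhat order of `Sym(S)`. -/
theorem bruhat_mul_right_iff (n : ℕ) (S : Set (Fin n)) (hS : S.Nonempty)
    (w : Equiv.Perm (Fin n)) (hw : ∀ i ∈ S, ∀ j ∈ S, i < j → w⁻¹ i < w⁻¹ j)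
    (x y : Equiv.Perm (Fin n))
    (hx : ∀ i, i ∉ S → x i = i) (hy : ∀ i, i ∉ S → y i = i) :
    bruhatLEWrt (adjTranspositions n) (x * w) (y * w) ↔
      bruhatLEWrt (adjTranspositionsOn n S) x y := by
  have hxF : BruhatAux.FixOut S x := hx
  have hyF : BruhatAux.FixOut S y := hy
  have hunivx : BruhatAux.FixOut Set.univ (x * w) := fun i hi => absurd (Set.mem_univ i) hi
  have hunivy : BruhatAux.FixOut Set.univ (y * w) := fun i hi => absurd (Set.mem_univ i) hi
  rw [BruhatAux.adj_eq_adjOn_univ]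
  constructor
  · rintro ⟨l, hr, hp, l', hs', hr', hp'⟩
    have hdom : BruhatAux.Dom Set.univ (x * w) (y * w) := by
      have := BruhatAux.dom_of_sublist hr hs' hr'
      rwa [hp, hp'] at this
    have hdomS : BruhatAux.Dom S x y := (BruhatAux.dom_coset_iff hw hxF hyF).mp hdom
    exact BruhatAux.bruhat_of_dom hxF hyF hdomS
  · rintro ⟨l, hr, hp, l', hs', hr', hp'⟩
    have hdomS : BruhatAux.Dom S x y := by
      have := BruhatAux.dom_of_sublist hr hs' hr'
      rwa [hp, hp'] at this
    have hdom : BruhatAux.Dom Set.univ (x * w) (y * w) :=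
      (BruhatAux.dom_coset_iff hw hxF hyF).mpr hdomS
    exact BruhatAux.bruhat_of_dom hunivx hunivy hdom
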